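/- Consider a flower-shaped knowledge graph consisting of a central node s, a directed stem s →^{r_0} b_1 →^{r_0} ... →^{r_0} b_t, and c ≥ 2 petals, where petal i consists of a directed 4-cycle-like gadget attached to s via two edges of types r_1^{(i)} and r_2^{(i)}, with the rest of petal i colored by r_1^{(i)}, and where the relation types are assigned cyclically so that r_2^{(i)} = r_1^{(i+1 mod c)}. Then the map swapping relation types according to the cyclic shift, together with the induced node permutation rotating the petals, is a non-trivial automorphism of the knowledge graph fixing s, r_0, and the stem pointwise. -/

import Mathlib

namespace Petals

/-- Vertices of the flower-shaped knowledge graph: the stem `b_0, …, b_t`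
(`b_0 = s` is the central node), and for each of the `c` petals, the nodes
`a_1, …, a_{2(l+1)+1}` (the petal length parameter being `l + 1 ≥ 1`). -/
abbrev PV (c t l : ℕ) := Fin (t + 1) ⊕ (Fin c × Fin (2 * l + 3))

/-- Relation types: `none` is `r₀` (the stem/query relation); `some i` is `r₁^{(i)}`,
and the cyclic assignment sets `r₂^{(i)} = r₁^{(i+1 mod c)} = some (finRotate c i)`. -/
abbrev PR (c : ℕ) := Option (Fin c)

/-- The edges of the flower-shaped knowledge graph with `c` petals of length `l + 1` and
a stem of length `t`: consecutive stem edges of type `r₀`; for each petal `i`, the two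
attachment edges `(s, r₁^{(i)}, a₁^{(i)})` and `(s, r₂^{(i)}, a₂^{(i)})`, the internal
edges `(a_p^{(i)}, r₁^{(i)}, a_{p+2}^{(i)})`, and the closing edge into the last node. -/
def petalsE (c t l : ℕ) : Set (PV c t l × PR c × PV c t l) :=
  {x | ∃ j : Fin t, x = (Sum.inl j.castSucc, none, Sum.inl j.succ)} ∪
  {x | ∃ i : Fin c, x = (Sum.inl 0, some i, Sum.inr (i, ⟨0, by omega⟩))} ∪
  {x | ∃ i : Fin c, x = (Sum.inl 0, some (finRotate c i), Sum.inr (i, ⟨1, by omega⟩))} ∪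
  {x | ∃ (i : Fin c) (p : ℕ) (hp : p + 2 ≤ 2 * l + 2),
      x = (Sum.inr (i, ⟨p, by omega⟩), some i, Sum.inr (i, ⟨p + 2, by omega⟩))} ∪
  {x | ∃ i : Fin c,
      x = (Sum.inr (i, ⟨2 * l + 1, by omega⟩), some i, Sum.inr (i, ⟨2 * l + 2, by omega⟩))}

/-- The node permutation rotating the petals (and fixing the stem pointwise). -/
def πrot (c t l : ℕ) : PV c t l ≃ PV c t l :=
  Equiv.sumCongr (Equiv.refl _) (Equiv.prodCongr (finRotate c) (Equiv.refl _))

/-- The relation permutation cyclically shifting the petal relation types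
(and fixing `r₀`). -/
def φrot (c : ℕ) : PR c ≃ PR c := Equiv.optionCongr (finRotate c)

lemma fwd (c t l : ℕ) (ρ : Fin c ≃ Fin c)
    (hρ : ∀ i, ρ (finRotate c i) = finRotate c (ρ i))
    (h : PV c t l) (r : PR c) (t' : PV c t l)
    (hm : (h, r, t') ∈ petalsE c t l) :
    (Equiv.sumCongr (Equiv.refl _) (Equiv.prodCongr ρ (Equiv.refl _)) h,
      Equiv.optionCongr ρ r,
      Equiv.sumCongr (Equiv.refl _) (Equiv.prodCongr ρ (Equiv.refl _)) t') ∈ petalsE c t l := by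
  simp only [petalsE, Set.mem_union, Set.mem_setOf_eq, Prod.mk.injEq] at hm ⊢
  rcases hm with ((((⟨j, h1, h2, h3⟩ | ⟨i, h1, h2, h3⟩) | ⟨i, h1, h2, h3⟩) | ⟨i, p, hp, h1, h2, h3⟩) | ⟨i, h1, h2, h3⟩) <;>
    subst h1 <;> subst h2 <;> subst h3
  · exact Or.inl (Or.inl (Or.inl (Or.inl ⟨j, by simp, by simp, by simp⟩)))
  · exact Or.inl (Or.inl (Or.inl (Or.inr ⟨ρ i, by simp, by simp, by simp⟩)))
  · exact Or.inl (Or.inl (Or.inr ⟨ρ i, by simp, by simpa using hρ i, by simp⟩))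
  · exact Or.inl (Or.inr ⟨ρ i, p, hp, by simp, by simp, by simp⟩)
  · exact Or.inr ⟨ρ i, by simp, by simp, by simp⟩

/-- In the flower-shaped knowledge graph with cyclically assigned petal
relation types (`r₂^{(i)} = r₁^{(i+1 mod c)}`), the map swapping relation types according
to the cyclic shift, together with the induced node permutation rotating the petals, is a
non-trivial automorphism of the knowledge graph fixing the central node `s`, the relation
`r₀`, and the stem pointwise. -/
theorem stmt_16 (c t l : ℕ) (hc : 2 ≤ c) :
    (∀ (h : PV c t l) (r : PR c) (t' : PV c t l),
        (h, r, t') ∈ petalsE c t l ↔ (πrot c t l h, φrot c r, πrot c t l t') ∈ petalsE c t l)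
      ∧ (∃ x : PV c t l, πrot c t l x ≠ x)
      ∧ (∀ j : Fin (t + 1), πrot c t l (Sum.inl j) = Sum.inl j)
      ∧ φrot c none = none := by
  refine ⟨fun h r t' => ?_, ?_, fun j => rfl, rfl⟩
  · constructor
    · exact fwd c t l (finRotate c) (fun i => rfl) h r t'
    · intro hm
      have := fwd c t l (finRotate c).symm
        (fun i => by rw [Equiv.symm_apply_apply, Equiv.apply_symm_apply]) _ _ _ hm
      have e1 : (Equiv.optionCongr (finRotate c)).symm (Option.map (finRotate c) r) = r :=
        (Equiv.optionCongr (finRotate c)).symm_apply_apply r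
      simpa [πrot, φrot, e1, Option.map_map, Prod.map_comp_map, Equiv.symm_comp_self] using this
  · refine ⟨Sum.inr (⟨0, by omega⟩, ⟨0, by omega⟩), ?_⟩
    simp only [πrot, Equiv.sumCongr_apply, Sum.map_inr, Equiv.prodCongr_apply,
      Prod.map, Equiv.refl_apply, ne_eq, Sum.inr.injEq, Prod.mk.injEq]
    intro hh
    obtain ⟨n, rfl⟩ : ∃ n, c = n + 2 := ⟨c - 2, by omega⟩
    have := hh.1
    rw [finRotate_succ_apply] at this
    simp [Fin.ext_iff, Fin.add_def] at this

end Petals
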